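/- For n ≥ 2, the number of labeled trees on {1,...,n} with all vertex degrees odd equals the sum, over all tuples (k_1,...,k_n) of even natural numbers with k_1 + ... + k_n = n - 2, of the multinomial coefficients (n-2)!/(k_1! k_2! ⋯ k_n!). -/

import Mathlib

open Finset SimpleGraph Nat

universe u

section TreeCount

variable {V : Type*} [DecidableEq V]


private noncomputable def dgr (T : SimpleGraph V) (i : V) : ℕ := Nat.card {j // T.Adj i j}

private lemma dgr_eq_ncard (T : SimpleGraph V) (i : V) :
    dgr T i = Set.ncard {j | T.Adj i j} := by
  rw [dgr, ← Nat.card_coe_set_eq]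
  rfl

private lemma dgr_eq_degree [Fintype V] (T : SimpleGraph V) [DecidableRel T.Adj] (i : V) :
    dgr T i = T.degree i := by
  rw [dgr, Nat.card_eq_fintype_card, SimpleGraph.degree, neighborFinset,
    Set.toFinset_card]
  rfl

private lemma adj_iff_of_dgr_one {T : SimpleGraph V} {v j : V}
    (h1 : dgr T v = 1) (hj : T.Adj v j) : ∀ w, T.Adj v w ↔ w = j := by
  rw [dgr_eq_ncard] at h1
  obtain ⟨a, ha⟩ := Set.ncard_eq_one.mp h1
  have hja : j = a := by
    have : j ∈ {w | T.Adj v w} := hj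
    rw [ha] at this; simpa using this
  intro w
  constructor
  · intro hw
    have : w ∈ {w | T.Adj v w} := hw
    rw [ha] at this; simp at this; rw [this, hja]
  · rintro rfl; exact hj

private lemma one_le_dgr [Fintype V] {T : SimpleGraph V} (hc : T.Preconnected)
    (hcard : 2 ≤ Fintype.card V) (v : V) : 1 ≤ dgr T v := by
  obtain ⟨w, hw⟩ := Fintype.exists_ne_of_one_lt_card (by omega) v
  obtain ⟨p⟩ := hc v w
  have hnn : ¬ p.Nil := Walk.not_nil_of_ne (Ne.symm hw)
  have : Nonempty {j // T.Adj v j} := ⟨⟨p.getVert 1, p.adj_snd hnn⟩⟩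
  exact Nat.one_le_iff_ne_zero.mpr (Nat.card_pos).ne'

private lemma multinomial_rec {α : Type*} [DecidableEq α] (s : Finset α) (k : α → ℕ)
    (h : 0 < ∑ i ∈ s, k i) :
    Nat.multinomial s k =
      ∑ j ∈ s, if 1 ≤ k j then Nat.multinomial s (Function.update k j (k j - 1)) else 0 := by
  have hpos : 0 < ∏ i ∈ s, (k i)! := Finset.prod_pos fun i _ => Nat.factorial_pos _
  apply Nat.eq_of_mul_eq_mul_left hpos
  rw [Nat.multinomial_spec, Finset.mul_sum]
  have hterm : ∀ j ∈ s, (∏ i ∈ s, (k i)!) *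
      (if 1 ≤ k j then Nat.multinomial s (Function.update k j (k j - 1)) else 0)
      = k j * (∑ i ∈ s, k i - 1)! := by
    intro j hj
    by_cases hkj : 1 ≤ k j
    · rw [if_pos hkj]
      have hupd : (fun i => (Function.update k j (k j - 1) i)!)
          = Function.update (fun i => (k i)!) j ((k j - 1))! := by
        ext i
        rcases eq_or_ne i j with rfl | hij
        · simp
        · simp [Function.update_of_ne hij]
      have hprod : ∏ i ∈ s, (k i)! = k j * ∏ i ∈ s, (Function.update k j (k j - 1) i)! := by
        calc ∏ i ∈ s, (k i)! = (k j)! * ∏ i ∈ s.erase j, (k i)! :=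
              (Finset.mul_prod_erase s _ hj).symm
        _ = k j * ((k j - 1)! * ∏ i ∈ s.erase j, (k i)!) := by
              rw [← Nat.mul_factorial_pred (by omega : k j ≠ 0), mul_assoc]
        _ = k j * ∏ i ∈ s, (Function.update k j (k j - 1) i)! := by
              rw [hupd, Finset.prod_update_of_mem hj, Finset.erase_eq]
      have hsum : ∑ i ∈ s, Function.update k j (k j - 1) i = ∑ i ∈ s, k i - 1 := by
        rw [Finset.sum_update_of_mem hj, ← Finset.erase_eq]
        have : ∑ i ∈ s.erase j, k i + k j = ∑ i ∈ s, k i := by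
          rw [add_comm, Finset.add_sum_erase s _ hj]
        omega
      rw [hprod, mul_assoc, Nat.multinomial_spec, hsum]
    · rw [if_neg hkj]
      have : k j = 0 := by omega
      simp [this]
  rw [Finset.sum_congr rfl hterm, ← Finset.sum_mul]
  exact (Nat.mul_factorial_pred h.ne').symm

/-- a path between vertices different from a degree-one vertex `v` avoids `v`. -/
private lemma path_avoids {T : SimpleGraph V} {v x y : V}
    (h1 : dgr T v = 1) (p : T.Walk x y) (hp : p.IsPath) (hx : x ≠ v) (hy : y ≠ v) :
    v ∉ p.support := by
  intro hv
  set q := p.takeUntil v hv with hqdef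
  set r := p.dropUntil v hv with hrdef
  have hspec : q.append r = p := p.take_spec hv
  have hnodup : (q.support ++ r.support.tail).Nodup := by
    have := hp.support_nodup
    rw [← hspec, Walk.support_append] at this
    exact this
  have hqr : ¬ q.reverse.Nil := Walk.not_nil_of_ne (fun h => hx h.symm)
  have hrr : ¬ r.Nil := Walk.not_nil_of_ne (fun h => hy h.symm)
  set a := q.reverse.getVert 1 with hadef
  set b := r.getVert 1 with hbdef
  have ha : T.Adj v a := q.reverse.adj_snd hqr
  have hb : T.Adj v b := r.adj_snd hrr
  have hba : b = a := by
    rw [(adj_iff_of_dgr_one h1 ha) b] at hb; exact hb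
  have hamem : a ∈ q.support := by
    have : a ∈ q.reverse.support := by
      rw [Walk.mem_support_iff_exists_getVert]
      exact ⟨1, rfl, by have := Walk.not_nil_iff_lt_length.mp hqr; omega⟩
    rwa [Walk.support_reverse, List.mem_reverse] at this
  have hbmem : b ∈ r.support.tail := by
    have hmem : b ∈ r.support := by
      rw [Walk.mem_support_iff_exists_getVert]
      exact ⟨1, rfl, by have := Walk.not_nil_iff_lt_length.mp hrr; omega⟩
    have hbv : b ≠ v := fun h => T.loopless.irrefl v (h ▸ hb)
    rw [Walk.support_eq_cons] at hmem
    rcases List.mem_cons.mp hmem with h | h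
    · exact absurd h hbv
    · exact h
  exact (List.disjoint_of_nodup_append hnodup) hamem (hba ▸ hbmem)

/-- a cycle avoids a degree-one vertex. -/
private lemma cycle_avoids {T : SimpleGraph V} {v u : V}
    (h1 : dgr T v = 1) (c : T.Walk u u) (hc : c.IsCycle) : v ∉ c.support := by
  intro hv
  have hc' : (c.rotate v hv).IsCycle := hc.rotate hv
  set c' := c.rotate v hv with hc'def
  have hnn : ¬ c'.Nil := hc'.not_nil
  have hb : T.Adj v (c'.getVert 1) := c'.adj_snd hnn
  have hbv : c'.getVert 1 ≠ v := fun h => T.loopless.irrefl v (by rw [h] at hb; exact hb)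
  have hq : c'.tail.IsPath := by
    have h1' : c'.IsTrail := hc'.isTrail
    rw [← c'.cons_tail_eq hnn, Walk.isTrail_cons] at h1'
    exact ⟨h1'.1, by rw [Walk.support_tail_of_not_nil c' hnn]; exact hc'.2⟩
  have hqr : ¬ c'.tail.reverse.Nil := Walk.not_nil_of_ne (fun h => hbv h.symm)
  have hb2 : T.Adj v (c'.tail.reverse.getVert 1) := c'.tail.reverse.adj_snd hqr
  have hb2b := (adj_iff_of_dgr_one h1 hb _).mp hb2
  have hkey : ∀ x (w : T.Walk x (c'.getVert 1)), w.IsPath → x = c'.getVert 1 → w.length = 0 := by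
    rintro x w hw rfl
    rw [(Walk.isPath_iff_eq_nil (p := w)).mp hw]
    rfl
  have htail : c'.tail.reverse.tail.IsPath := by
    have hqrp : c'.tail.reverse.IsPath := hq.reverse
    rw [← c'.tail.reverse.cons_tail_eq hqr, Walk.cons_isPath_iff] at hqrp
    exact hqrp.1
  have hlen0 : c'.tail.reverse.tail.length = 0 := hkey _ _ htail hb2b
  have hlen1 := Walk.length_tail_add_one hqr
  have hlen2 := Walk.length_tail_add_one hnn
  have h3 := hc'.three_le_length
  rw [Walk.length_reverse] at hlen1
  omega

/-- transfer a walk into an induced subgraph -/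
private def walkToInduce {T : SimpleGraph V} (s : Set V) :
    ∀ {x y : V} (p : T.Walk x y) (_ : ∀ w ∈ p.support, w ∈ s) (hx : x ∈ s) (hy : y ∈ s),
      (T.induce s).Walk ⟨x, hx⟩ ⟨y, hy⟩
  | _, _, .nil, _, _, _ => .nil
  | _, _, .cons (v := a) hadj p, h, hx, hy =>
      have ha : a ∈ s := h a (by simp)
      .cons (by exact hadj) (walkToInduce s p (fun w hw => h w (by simp [hw])) ha hy)

private lemma walkToInduce_map {T : SimpleGraph V} (s : Set V) :
    ∀ {x y : V} (p : T.Walk x y) (h : ∀ w ∈ p.support, w ∈ s) (hx : x ∈ s) (hy : y ∈ s),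
      (walkToInduce s p h hx hy).map (SimpleGraph.Embedding.induce s).toHom = p
  | _, _, .nil, _, _, _ => rfl
  | _, _, .cons (v := a) hadj p, h, hx, hy => by
      rw [walkToInduce]
      exact congrArg (Walk.cons hadj) (walkToInduce_map s p _ _ _)

private lemma induce_isTree {T : SimpleGraph V} {v : V} (hT : T.IsTree) (h1 : dgr T v = 1)
    (hne : Nonempty {w : V // w ≠ v}) : (T.induce {w | w ≠ v}).IsTree := by
  refine ⟨?_, ?_⟩
  · rw [connected_iff]
    refine ⟨?_, hne⟩
    rintro ⟨x, hx⟩ ⟨y, hy⟩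
    obtain ⟨p, hp, -⟩ := hT.existsUnique_path x y
    have hav := path_avoids h1 p hp hx hy
    have hmem : ∀ w ∈ p.support, w ∈ {w | w ≠ v} := fun w hw heq => hav (heq ▸ hw)
    exact ⟨walkToInduce _ p hmem hx hy⟩
  · intro x c hc
    have hinj : Function.Injective (SimpleGraph.Embedding.induce
        (G := T) {w | w ≠ v}).toHom := Subtype.coe_injective
    have := (Walk.map_isCycle_iff_of_injective hinj).mpr hc
    exact hT.2 _ this

private lemma dgr_induce {T : SimpleGraph V} {v j : V} (h1 : dgr T v = 1) (hj : T.Adj v j)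
    [Finite V] (w : {u : V // u ≠ v}) :
    dgr (T.induce {u | u ≠ v}) w = if (w : V) = j then dgr T ↑w - 1 else dgr T ↑w := by
  have hcard : dgr (T.induce {u | u ≠ v}) w = Set.ncard ({u | T.Adj ↑w u} \ {v}) := by
    rw [dgr]
    rw [Nat.card_congr (α := {j // (T.induce {u | u ≠ v}).Adj w j})
      (β := ↥({u | T.Adj ↑w u} \ {v}))
      ⟨fun ⟨⟨u, hu⟩, ha⟩ => ⟨u, ⟨ha, hu⟩⟩, fun ⟨u, hu1, hu2⟩ => ⟨⟨u, hu2⟩, hu1⟩,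
        by rintro ⟨⟨u, hu⟩, ha⟩; rfl, by rintro ⟨u, hu1, hu2⟩; rfl⟩]
    exact Nat.card_coe_set_eq _
  rw [hcard]
  by_cases hwj : (w : V) = j
  · rw [if_pos hwj]
    have hvmem : v ∈ {u | T.Adj ↑w u} := by rw [hwj]; exact hj.symm
    rw [Set.ncard_diff_singleton_of_mem hvmem, dgr_eq_ncard]
  · rw [if_neg hwj]
    have hvnot : v ∉ {u | T.Adj ↑w u} := by
      intro hmem
      exact hwj ((adj_iff_of_dgr_one h1 hj ↑w).mp hmem.symm)
    rw [Set.diff_singleton_eq_self hvnot, dgr_eq_ncard]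

/-- attach a leaf `v` to the vertex `j` -/
private noncomputable def attachLeaf (v : V) (T' : SimpleGraph {w : V // w ≠ v})
    (j : {w : V // w ≠ v}) : SimpleGraph V :=
  T'.map (Function.Embedding.subtype _) ⊔ edge v ↑j

private lemma attachLeaf_adj {v : V} (T' : SimpleGraph {w : V // w ≠ v})
    (j : {w : V // w ≠ v}) (x y : V) : (attachLeaf v T' j).Adj x y ↔
      (∃ a b : {w : V // w ≠ v}, T'.Adj a b ∧ ↑a = x ∧ ↑b = y) ∨
        (x = v ∧ y = ↑j) ∨ (x = ↑j ∧ y = v) := by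
  have hjv : (j : V) ≠ v := j.2
  simp only [attachLeaf, sup_adj, map_adj, edge_adj]
  constructor
  · rintro (⟨a, b, hab, ha, hb⟩ | ⟨(⟨rfl, rfl⟩ | ⟨rfl, rfl⟩), hne⟩)
    · exact Or.inl ⟨a, b, hab, ha, hb⟩
    · exact Or.inr (Or.inl ⟨rfl, rfl⟩)
    · exact Or.inr (Or.inr ⟨rfl, rfl⟩)
  · rintro (⟨a, b, hab, ha, hb⟩ | ⟨rfl, rfl⟩ | ⟨rfl, rfl⟩)
    · exact Or.inl ⟨a, b, hab, ha, hb⟩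
    · exact Or.inr ⟨Or.inl ⟨rfl, rfl⟩, fun h => hjv h.symm⟩
    · exact Or.inr ⟨Or.inr ⟨rfl, rfl⟩, hjv⟩

private lemma attachLeaf_adj_v {v : V} (T' : SimpleGraph {w : V // w ≠ v})
    (j : {w : V // w ≠ v}) (y : V) : (attachLeaf v T' j).Adj v y ↔ y = ↑j := by
  rw [attachLeaf_adj]
  constructor
  · rintro (⟨a, b, hab, ha, hb⟩ | ⟨-, rfl⟩ | ⟨hx, -⟩)
    · exact absurd ha a.2
    · rfl
    · exact absurd hx.symm j.2
  · rintro rfl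
    exact Or.inr (Or.inl ⟨rfl, rfl⟩)

private lemma dgr_attachLeaf_v {v : V} (T' : SimpleGraph {w : V // w ≠ v})
    (j : {w : V // w ≠ v}) : dgr (attachLeaf v T' j) v = 1 := by
  rw [dgr_eq_ncard]
  have : {y | (attachLeaf v T' j).Adj v y} = {(j : V)} := by
    ext y; simp [attachLeaf_adj_v]
  rw [this, Set.ncard_singleton]

private lemma induce_attachLeaf {v : V} (T' : SimpleGraph {w : V // w ≠ v})
    (j : {w : V // w ≠ v}) :
    (attachLeaf v T' j).induce {w | w ≠ v} = T' := by
  ext a b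
  obtain ⟨a, ha⟩ := a
  obtain ⟨b, hb⟩ := b
  show (attachLeaf v T' j).Adj a b ↔ _
  rw [attachLeaf_adj]
  constructor
  · rintro (⟨a', b', hab, ha', hb'⟩ | ⟨rfl, -⟩ | ⟨-, rfl⟩)
    · have : a' = ⟨a, ha⟩ := Subtype.ext ha'
      have h2 : b' = ⟨b, hb⟩ := Subtype.ext hb'
      rwa [this, h2] at hab
    · exact absurd rfl ha
    · exact absurd rfl hb
  · intro h
    exact Or.inl ⟨⟨a, ha⟩, ⟨b, hb⟩, h, rfl, rfl⟩

private lemma attachLeaf_induce {T : SimpleGraph V} {v j : V} (h1 : dgr T v = 1)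
    (hj : T.Adj v j) (hjv : j ≠ v) :
    attachLeaf v (T.induce {w | w ≠ v}) ⟨j, hjv⟩ = T := by
  ext x y
  rw [attachLeaf_adj]
  constructor
  · rintro (⟨a, b, hab, rfl, rfl⟩ | ⟨rfl, rfl⟩ | ⟨rfl, rfl⟩)
    · exact hab
    · exact hj
    · exact hj.symm
  · intro h
    by_cases hx : x = v
    · subst hx
      exact Or.inr (Or.inl ⟨rfl, (adj_iff_of_dgr_one h1 hj y).mp h⟩)
    · by_cases hy : y = v
      · subst hy
        have : x = j := (adj_iff_of_dgr_one h1 hj x).mp h.symm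
        exact Or.inr (Or.inr ⟨this, rfl⟩)
      · exact Or.inl ⟨⟨x, hx⟩, ⟨y, hy⟩, h, rfl, rfl⟩

private noncomputable def leafHom (v : V) (T' : SimpleGraph {w : V // w ≠ v})
    (j : {w : V // w ≠ v}) : T' →g attachLeaf v T' j :=
  ⟨fun a => (a : V), fun {a b} hab => (attachLeaf_adj T' j _ _).mpr (Or.inl ⟨a, b, hab, rfl, rfl⟩)⟩

private lemma attachLeaf_isTree {v : V} {T' : SimpleGraph {w : V // w ≠ v}}
    (hT' : T'.IsTree) (j : {w : V // w ≠ v}) : (attachLeaf v T' j).IsTree := by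
  set A := attachLeaf v T' j with hA
  have hreach : ∀ x : V, A.Reachable x v := by
    intro x
    by_cases hxv : x = v
    · subst hxv; rfl
    · have h1 : T'.Reachable ⟨x, hxv⟩ j := hT'.isConnected.preconnected _ _
      have h2 : A.Reachable x ↑j := by
        obtain ⟨p⟩ := h1
        exact ⟨(p.map (leafHom v T' j)).copy rfl rfl⟩
      have hadj : A.Adj v ↑j := (attachLeaf_adj_v T' j ↑j).mpr rfl
      exact h2.trans hadj.symm.reachable
  refine ⟨?_, ?_⟩
  · rw [connected_iff]
    exact ⟨fun x y => (hreach x).trans (hreach y).symm, ⟨v⟩⟩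
  · intro u c hc
    have hdeg : dgr A v = 1 := dgr_attachLeaf_v T' j
    have hav : v ∉ c.support := cycle_avoids hdeg c hc
    have hmem : ∀ w ∈ c.support, w ∈ {w : V | w ≠ v} := fun w hw heq => hav (heq ▸ hw)
    have hu : u ∈ {w : V | w ≠ v} := hmem u c.start_mem_support
    set c' := walkToInduce {w : V | w ≠ v} c hmem hu hu with hc'
    have hmap : c'.map (SimpleGraph.Embedding.induce _).toHom = c := walkToInduce_map _ c hmem hu hu
    have hcyc : c'.IsCycle := by
      rw [← Walk.map_isCycle_iff_of_injective (f := (SimpleGraph.Embedding.induce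
        (G := A) {w | w ≠ v}).toHom) Subtype.coe_injective, hmap]
      exact hc
    have hac : (A.induce {w | w ≠ v}).IsAcyclic := by
      rw [induce_attachLeaf T' j]
      exact hT'.2
    exact hac c' hcyc

private lemma dgr_attachLeaf_coe [Fintype V] {v : V} (T' : SimpleGraph {w : V // w ≠ v})
    (j : {w : V // w ≠ v}) (w : {w : V // w ≠ v}) :
    dgr (attachLeaf v T' j) ↑w = dgr T' w + (if w = j then 1 else 0) := by
  have h1 : dgr (attachLeaf v T' j) v = 1 := dgr_attachLeaf_v T' j
  have hj : (attachLeaf v T' j).Adj v ↑j := (attachLeaf_adj_v T' j ↑j).mpr rfl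
  have hd := dgr_induce h1 hj w
  rw [induce_attachLeaf T' j] at hd
  by_cases hwj : w = j
  · subst hwj
    rw [if_pos rfl] at hd ⊢
    have hpos : 1 ≤ dgr (attachLeaf v T' w) ↑w := by
      have : Nonempty {u // (attachLeaf v T' w).Adj ↑w u} := ⟨⟨v, hj.symm⟩⟩
      exact Nat.one_le_iff_ne_zero.mpr (Nat.card_pos).ne'
    omega
  · rw [if_neg hwj]
    rw [if_neg (fun h => hwj (Subtype.ext h))] at hd
    omega

private lemma nat_card_sigma {ι : Type*} [Fintype ι] (A : ι → Type*) [∀ i, Finite (A i)] :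
    Nat.card (Σ i, A i) = ∑ i, Nat.card (A i) := by
  letI := fun i => Fintype.ofFinite (A i)
  simp only [Nat.card_eq_fintype_card]
  exact Fintype.card_sigma

private lemma multinomial_univ_zero {W : Type*} [Fintype W] :
    Nat.multinomial Finset.univ (fun _ : W => 0) = 1 := by
  have := Nat.multinomial_spec Finset.univ (fun _ : W => 0)
  simpa using this

private lemma multinomial_drop_zero [Fintype V] (v : V) (k : V → ℕ) (hk : k v = 0) :
    Nat.multinomial Finset.univ k
      = Nat.multinomial (Finset.univ : Finset {w : V // w ≠ v}) (fun w => k ↑w) := by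
  have hmem : ∀ x : V, x ∈ Finset.univ.erase v ↔ x ≠ v := by simp
  have hsum : ∑ u, k u = ∑ w : {w : V // w ≠ v}, k ↑w := by
    rw [← Finset.sum_subtype (Finset.univ.erase v) hmem k]
    rw [Finset.sum_erase _ hk]
  have hprod : ∏ u, (k u)! = ∏ w : {w : V // w ≠ v}, (k ↑w)! := by
    rw [← Finset.prod_subtype (Finset.univ.erase v) hmem (fun u => (k u)!)]
    rw [Finset.prod_erase _ (by rw [hk]; rfl)]
  rw [Nat.multinomial, Nat.multinomial, hsum, hprod]

private lemma count_trees : ∀ (n : ℕ) (V : Type u) [Fintype V] [DecidableEq V],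
    Fintype.card V = n → 2 ≤ n → ∀ (d : V → ℕ), (∀ u, 1 ≤ d u) → (∑ u, d u = 2 * n - 2) →
    Nat.card {T : SimpleGraph V // T.IsTree ∧ ∀ i, dgr T i = d i}
      = Nat.multinomial Finset.univ (fun i => d i - 1) := by
  intro n
  induction n using Nat.strong_induction_on with
  | _ n IH =>
  intro V _ _ hcard hn2 d hd hsum
  rcases eq_or_lt_of_le hn2 with hn2' | hn3
  · -- base case : n = 2
    subst hn2'
    have hd1 : ∀ u, d u = 1 := by
      intro u
      have h1 : ∑ x ∈ Finset.univ.erase u, d x + d u = ∑ x, d x :=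
        Finset.sum_erase_add _ _ (Finset.mem_univ u)
      have h2 : (Finset.univ.erase u).card = 1 := by
        rw [Finset.card_erase_of_mem (Finset.mem_univ u), Finset.card_univ, hcard]
      have h3 : (Finset.univ.erase u).card * 1 ≤ ∑ x ∈ Finset.univ.erase u, d x :=
        Finset.card_nsmul_le_sum _ _ _ (fun x _ => hd x)
      have := hd u
      omega
    have hsub1 : ∀ x : V, Fintype.card {z : V // z ≠ x} = 1 := by
      intro x
      have : Fintype.card {z : V // ¬ z = x} = Fintype.card V - Fintype.card {z : V // z = x} :=
        Fintype.card_subtype_compl _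
      rw [Fintype.card_subtype_eq x, hcard] at this
      exact this
    have hdgr_top : ∀ u : V, dgr ⊤ u = 1 := by
      intro u
      rw [dgr, Nat.card_eq_fintype_card]
      have h := hsub1 u
      rw [← h]
      apply Fintype.card_congr
      exact Equiv.subtypeEquivRight (fun z => by simp [adj_comm, eq_comm, ne_comm])
    have htop : (⊤ : SimpleGraph V).IsTree := by
      constructor
      · rw [connected_iff]
        refine ⟨fun x y => ?_, Fintype.card_pos_iff.mp (by omega)⟩
        rcases eq_or_ne x y with rfl | hxy
        · rfl
        · exact (Adj.reachable (by simpa using hxy))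
      · intro u c hc
        have h3 := hc.three_le_length
        have hnodup := hc.2
        have hlen : c.support.tail.length = c.length := by
          have := Walk.length_support c
          simp [List.length_tail, this]
        have hle := List.Nodup.length_le_card hnodup
        rw [hlen, hcard] at hle
        omega
    have huniq : ∀ T : SimpleGraph V, T.IsTree → (∀ i, dgr T i = d i) → T = ⊤ := by
      intro T hT hdeg
      ext x y
      simp only [top_adj]
      constructor
      · exact Adj.ne
      · intro hxy
        obtain ⟨p⟩ := hT.isConnected.preconnected x y
        have hnn : ¬ p.Nil := Walk.not_nil_of_ne hxy
        have hadj : T.Adj x (p.getVert 1) := p.adj_snd hnn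
        have hg1 : p.getVert 1 ≠ x := fun h => T.loopless.irrefl x (by rw [h] at hadj; exact hadj)
        have hsing : Subsingleton {z : V // z ≠ x} :=
          Fintype.card_le_one_iff_subsingleton.mp (le_of_eq (hsub1 x))
        have : (⟨p.getVert 1, hg1⟩ : {z : V // z ≠ x}) = ⟨y, Ne.symm hxy⟩ :=
          hsing.elim _ _
        have hgy : p.getVert 1 = y := congrArg Subtype.val this
        rwa [hgy] at hadj
    have hcardone : Nat.card {T : SimpleGraph V // T.IsTree ∧ ∀ i, dgr T i = d i} = 1 := by
      rw [Nat.card_eq_one_iff_unique]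
      constructor
      · constructor
        rintro ⟨T1, hT1, hd1'⟩ ⟨T2, hT2, hd2'⟩
        apply Subtype.ext
        show T1 = T2
        rw [huniq T1 hT1 hd1', huniq T2 hT2 hd2']
      · exact ⟨⟨⊤, htop, fun i => by rw [hdgr_top i, hd1 i]⟩⟩
    rw [hcardone]
    have : (fun i : V => d i - 1) = fun _ : V => 0 := by
      ext i; rw [hd1 i]
    rw [this, multinomial_univ_zero]
  · -- inductive step : n ≥ 3
    have hex : ∃ v, d v = 1 := by
      by_contra hcon
      push_neg at hcon
      have h2 : ∀ u ∈ Finset.univ, 2 ≤ d u := fun u _ => by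
        have := hd u; have := hcon u; omega
      have hle := Finset.card_nsmul_le_sum Finset.univ d 2 h2
      rw [Finset.card_univ, hcard, smul_eq_mul] at hle
      have hh : Finset.univ.sum d = ∑ u : V, d u := rfl
      omega
    obtain ⟨v, hv⟩ := hex
    have hcV' : Fintype.card {w : V // w ≠ v} = n - 1 := by
      have h := Fintype.card_subtype_compl (fun z : V => z = v)
      rw [Fintype.card_subtype_eq v, hcard] at h
      exact h
    have hne' : Nonempty {w : V // w ≠ v} := Fintype.card_pos_iff.mp (by omega)
    set d' : {w : V // w ≠ v} → {w : V // w ≠ v} → ℕ :=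
      fun j => Function.update (fun w : {w : V // w ≠ v} => d ↑w) j (d ↑j - 1) with hd'def
    have hd'val : ∀ j w, d' j w = if w = j then d ↑j - 1 else d ↑w := by
      intro j w
      rcases eq_or_ne w j with rfl | hwj
      · simp [hd'def]
      · simp [hd'def, Function.update_of_ne hwj, hwj]
    have nbspec : ∀ (x : {T : SimpleGraph V // T.IsTree ∧ ∀ i, dgr T i = d i}),
        Nonempty {j // x.1.Adj v j} := by
      intro x
      have h1 : dgr x.1 v = 1 := by rw [x.2.2 v, hv]
      have : 0 < Nat.card {j // x.1.Adj v j} := by rw [← dgr, h1]; omega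
      exact (Nat.card_pos_iff.mp this).1
    have nbne : ∀ (x : {T : SimpleGraph V // T.IsTree ∧ ∀ i, dgr T i = d i}) (j0 : {j // x.1.Adj v j}), (j0 : V) ≠ v := by
      rintro x ⟨j0, hj0⟩ h
      have h' : j0 = v := h
      rw [h'] at hj0
      exact x.1.loopless.irrefl v hj0
    let nb : {T : SimpleGraph V // T.IsTree ∧ ∀ i, dgr T i = d i} → {w : V // w ≠ v} :=
      fun x => ⟨((nbspec x).some).1, nbne x (nbspec x).some⟩
    have nb_adj : ∀ (x : {T : SimpleGraph V // T.IsTree ∧ ∀ i, dgr T i = d i}), x.1.Adj v ↑(nb x) := fun x => ((nbspec x).some).2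
    have h1of : ∀ (x : {T : SimpleGraph V // T.IsTree ∧ ∀ i, dgr T i = d i}),
        dgr x.1 v = 1 := fun x => by rw [x.2.2 v, hv]
    have nb_eq : ∀ (x : {T : SimpleGraph V // T.IsTree ∧ ∀ i, dgr T i = d i}) (j : {w : V // w ≠ v}), x.1.Adj v ↑j → nb x = j := by
      intro x j hadj
      have h2 := (adj_iff_of_dgr_one (h1of x) hadj ↑(nb x)).mp (nb_adj x)
      exact Subtype.ext h2
    have fibEquiv : ∀ j : {w : V // w ≠ v},
        {x : {T : SimpleGraph V // T.IsTree ∧ ∀ i, dgr T i = d i} // nb x = j} ≃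
        {T' : SimpleGraph {w : V // w ≠ v} // T'.IsTree ∧ ∀ w, dgr T' w = d' j w} := by
      intro j
      have hadjj : ∀ (x : {x : {T : SimpleGraph V // T.IsTree ∧ ∀ i, dgr T i = d i} //
          nb x = j}), x.1.1.Adj v ↑j := by
        intro x
        have := nb_adj x.1
        rwa [x.2] at this
      refine {
        toFun := fun x => ⟨x.1.1.induce {w | w ≠ v},
          induce_isTree x.1.2.1 (h1of x.1) hne', ?_⟩
        invFun := fun T' => ⟨⟨attachLeaf v T'.1 j, attachLeaf_isTree T'.2.1 j, ?_⟩, ?_⟩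
        left_inv := ?_
        right_inv := ?_ }
      · intro w
        rw [dgr_induce (h1of x.1) (hadjj x) w, hd'val j w]
        rcases eq_or_ne w j with rfl | hwj
        · rw [if_pos rfl, if_pos rfl, x.1.2.2]
        · rw [if_neg (fun h => hwj (Subtype.ext h)), if_neg hwj, x.1.2.2]
      · intro i
        rcases eq_or_ne i v with rfl | hiv
        · rw [dgr_attachLeaf_v, hv]
        · have := dgr_attachLeaf_coe T'.1 j ⟨i, hiv⟩
          rw [this, T'.2.2, hd'val]
          rcases eq_or_ne (⟨i, hiv⟩ : {w : V // w ≠ v}) j with hij | hij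
          · rw [if_pos hij, if_pos hij]
            have : d ↑j ≥ 1 := hd _
            have hji : (j : V) = i := by rw [← hij]
            rw [← hji]
            omega
          · rw [if_neg hij, if_neg hij]
            show d i + 0 = d i
            omega
      · exact nb_eq _ j ((attachLeaf_adj_v T'.1 j ↑j).mpr rfl)
      · intro x
        apply Subtype.ext
        apply Subtype.ext
        show attachLeaf v (x.1.1.induce {w | w ≠ v}) j = x.1.1
        have := attachLeaf_induce (h1of x.1) (hadjj x) j.2
        convert this using 2
      · intro T'
        apply Subtype.ext
        show (attachLeaf v T'.1 j).induce {w | w ≠ v} = T'.1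
        exact induce_attachLeaf T'.1 j
    -- counting
    have hstep1 : Nat.card {T : SimpleGraph V // T.IsTree ∧ ∀ i, dgr T i = d i}
        = ∑ j : {w : V // w ≠ v},
            Nat.card {T' : SimpleGraph {w : V // w ≠ v} // T'.IsTree ∧ ∀ w, dgr T' w = d' j w} := by
      rw [Nat.card_congr (Equiv.sigmaFiberEquiv nb).symm, nat_card_sigma]
      exact Finset.sum_congr rfl fun j _ => Nat.card_congr (fibEquiv j)
    rw [hstep1]
    -- sum over coe
    have hsumV' : ∑ w : {w : V // w ≠ v}, d ↑w = 2 * n - 3 := by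
      have hmem : ∀ x : V, x ∈ Finset.univ.erase v ↔ x ≠ v := by simp
      have h1 : ∑ u ∈ Finset.univ.erase v, d u = ∑ w : {w : V // w ≠ v}, d ↑w :=
        Finset.sum_subtype (Finset.univ.erase v) hmem d
      have h2 : ∑ u ∈ Finset.univ.erase v, d u + d v = ∑ u, d u :=
        Finset.sum_erase_add _ _ (Finset.mem_univ v)
      omega
    -- evaluate each summand
    have hterm : ∀ j : {w : V // w ≠ v},
        Nat.card {T' : SimpleGraph {w : V // w ≠ v} // T'.IsTree ∧ ∀ w, dgr T' w = d' j w}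
        = if 2 ≤ d ↑j then
            Nat.multinomial Finset.univ (fun w : {w : V // w ≠ v} => d' j w - 1) else 0 := by
      intro j
      by_cases h2j : 2 ≤ d ↑j
      · rw [if_pos h2j]
        refine IH (n - 1) (by omega) _ hcV' (by omega) (d' j) ?_ ?_
        · intro w
          rw [hd'val]
          split
          · omega
          · exact hd ↑w
        · have h3 : ∑ w, d' j w + 1 = ∑ w : {w : V // w ≠ v}, d ↑w := by
            have h4 : ∑ w, d' j w = d ↑j - 1 + ∑ w ∈ Finset.univ \ {j}, d ↑w := by
              rw [hd'def]
              exact Finset.sum_update_of_mem (Finset.mem_univ j) _ _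
            have h5 : d ↑j + ∑ w ∈ Finset.univ \ {j}, d ↑w = ∑ w : {w : V // w ≠ v}, d ↑w := by
              rw [Finset.sdiff_singleton_eq_erase]
              exact Finset.add_sum_erase Finset.univ
                (fun w : {w : V // w ≠ v} => d ↑w) (Finset.mem_univ j)
            omega
          omega
      · rw [if_neg h2j]
        have hj1 : d ↑j = 1 := by have := hd ↑j; omega
        have : IsEmpty {T' : SimpleGraph {w : V // w ≠ v} //
            T'.IsTree ∧ ∀ w, dgr T' w = d' j w} := by
          constructor
          rintro ⟨T', hT', hdeg⟩
          have h0 : dgr T' j = 0 := by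
            rw [hdeg j, hd'val, if_pos rfl, hj1]
          have h1 : 1 ≤ dgr T' j :=
            one_le_dgr hT'.isConnected.preconnected (by omega) j
          omega
        exact Nat.card_of_isEmpty
    rw [Finset.sum_congr rfl fun j _ => hterm j]
    -- now the RHS
    rw [multinomial_drop_zero v (fun i => d i - 1) (by show d v - 1 = 0; rw [hv])]
    have hposk : 0 < ∑ w : {w : V // w ≠ v}, (d ↑w - 1) := by
      have h6 : ∑ w : {w : V // w ≠ v}, (d ↑w - 1) + ∑ _w : {w : V // w ≠ v}, 1
          = ∑ w : {w : V // w ≠ v}, d ↑w := by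
        rw [← Finset.sum_add_distrib]
        exact Finset.sum_congr rfl fun w _ => by have := hd ↑w; omega
      have h7 : ∑ _w : {w : V // w ≠ v}, (1 : ℕ) = n - 1 := by
        rw [Finset.sum_const, smul_eq_mul, mul_one, Finset.card_univ, hcV']
      omega
    rw [multinomial_rec Finset.univ _ hposk]
    refine (Finset.sum_congr rfl fun j _ => ?_).symm
    by_cases h2j : 2 ≤ d ↑j
    · rw [if_pos (by omega : 1 ≤ d ↑j - 1), if_pos h2j]
      congr 1
      ext w
      rcases eq_or_ne w j with rfl | hwj
      · rw [Function.update_self, hd'val, if_pos rfl]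
      · rw [Function.update_of_ne hwj, hd'val, if_neg hwj]
    · rw [if_neg (by omega : ¬ 1 ≤ d ↑j - 1), if_neg h2j]

end TreeCount

theorem stmt_8 (n : ℕ) (hn : 2 ≤ n) :
    Nat.card {T : SimpleGraph (Fin n) //
        T.IsTree ∧ ∀ i, Odd (Nat.card {j // T.Adj i j})} =
      ∑ k ∈ (Finset.Nat.antidiagonalTuple n (n - 2)).filter (fun k => ∀ i, Even (k i)),
        Nat.multinomial Finset.univ k := by
  classical
  have hsum_dgr : ∀ T : SimpleGraph (Fin n), T.IsTree → ∑ i, dgr T i = 2 * n - 2 := by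
    intro T hT
    have hedge : T.edgeFinset.card + 1 = n := by
      have := hT.card_edgeFinset
      rwa [Fintype.card_fin] at this
    have hhs : ∑ i, T.degree i = 2 * T.edgeFinset.card :=
      T.sum_degrees_eq_twice_card_edges
    have : ∑ i, dgr T i = ∑ i, T.degree i :=
      Finset.sum_congr rfl fun i _ => dgr_eq_degree T i
    omega
  set P : SimpleGraph (Fin n) → Prop := fun T => T.IsTree ∧ ∀ i, Odd (dgr T i) with hP
  have hLHS : Nat.card {T : SimpleGraph (Fin n) //
      T.IsTree ∧ ∀ i, Odd (Nat.card {j // T.Adj i j})} = (Finset.univ.filter P).card := by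
    rw [Nat.card_eq_fintype_card]
    exact Fintype.card_subtype P
  rw [hLHS]
  set K := (Finset.Nat.antidiagonalTuple n (n - 2)).filter (fun k => ∀ i, Even (k i)) with hK
  set F : SimpleGraph (Fin n) → (Fin n → ℕ) := fun T i => dgr T i - 1 with hF
  have hmaps : ∀ T ∈ Finset.univ.filter P, F T ∈ K := by
    intro T hT
    rw [Finset.mem_filter] at hT
    obtain ⟨-, hTtree, hTodd⟩ := hT
    have hone : ∀ i, 1 ≤ dgr T i := by
      intro i
      rcases hTodd i with ⟨m, hm⟩
      omega
    rw [hK, Finset.mem_filter, Finset.Nat.mem_antidiagonalTuple]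
    refine ⟨?_, ?_⟩
    · have h6 : ∑ i, F T i + ∑ _i : Fin n, 1 = ∑ i, dgr T i := by
        rw [← Finset.sum_add_distrib]
        exact Finset.sum_congr rfl fun i _ => by have := hone i; simp [hF]; omega
      have h7 : ∑ _i : Fin n, (1 : ℕ) = n := by
        rw [Finset.sum_const, smul_eq_mul, mul_one, Finset.card_univ, Fintype.card_fin]
      have h8 := hsum_dgr T hTtree
      omega
    · intro i
      rcases hTodd i with ⟨m, hm⟩
      refine ⟨m, ?_⟩
      simp only [hF]
      omega
  rw [Finset.card_eq_sum_card_fiberwise hmaps]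
  refine Finset.sum_congr rfl fun k hk => ?_
  rw [hK, Finset.mem_filter, Finset.Nat.mem_antidiagonalTuple] at hk
  obtain ⟨hksum, hkeven⟩ := hk
  have hiff : ∀ T : SimpleGraph (Fin n), (P T ∧ F T = k) ↔
      (T.IsTree ∧ ∀ i, dgr T i = k i + 1) := by
    intro T
    constructor
    · rintro ⟨⟨hTtree, hTodd⟩, hFk⟩
      refine ⟨hTtree, fun i => ?_⟩
      have h1 : dgr T i - 1 = k i := congrFun hFk i
      rcases hTodd i with ⟨m, hm⟩
      omega
    · rintro ⟨hTtree, hdeg⟩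
      refine ⟨⟨hTtree, fun i => ?_⟩, funext fun i => ?_⟩
      · rcases hkeven i with ⟨m, hm⟩
        exact ⟨m, by rw [hdeg i, hm]; omega⟩
      · simp only [hF]
        rw [hdeg i]
        omega
  have hcardfib : (Finset.filter (fun T => F T = k) (Finset.univ.filter P)).card
      = Nat.card {T : SimpleGraph (Fin n) // T.IsTree ∧ ∀ i, dgr T i = k i + 1} := by
    rw [Finset.filter_filter, Nat.card_eq_fintype_card]
    rw [Fintype.card_subtype]
    apply Finset.card_bij (fun T _ => T)
    · intro T hT
      rw [Finset.mem_filter] at hT ⊢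
      exact ⟨Finset.mem_univ T, (hiff T).mp ⟨hT.2.1, hT.2.2⟩⟩
    · intro T1 h1 T2 h2 h
      exact h
    · intro T hT
      rw [Finset.mem_filter] at hT
      refine ⟨T, ?_, rfl⟩
      rw [Finset.mem_filter]
      exact ⟨Finset.mem_univ T, ((hiff T).mpr hT.2).1, ((hiff T).mpr hT.2).2⟩
  rw [hcardfib]
  have := count_trees n (Fin n) (Fintype.card_fin n) hn (fun i => k i + 1)
    (fun u => by show 1 ≤ k u + 1; omega) ?_
  · rw [this]
    exact Nat.multinomial_congr fun i _ => by show k i + 1 - 1 = k i; omega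
  · show ∑ u : Fin n, (k u + 1) = 2 * n - 2
    have h6 : ∑ u : Fin n, (k u + 1) = ∑ u, k u + ∑ _u : Fin n, 1 :=
      Finset.sum_add_distrib
    have h7 : ∑ _u : Fin n, (1 : ℕ) = n := by
      rw [Finset.sum_const, smul_eq_mul, mul_one, Finset.card_univ, Fintype.card_fin]
    omega
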